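/- For every l ∈ ℤ, the family of polynomials (X^{2k} + (−X−l)^{2k})_{k ∈ ℕ} is a basis of the subspace P_l = {p ∈ ℂ[X] : p(−X−l) = p(X)}: the family is linearly independent over ℂ and its span equals P_l. -/

import Mathlib

open Polynomial

/-- The family `(X^{2k} + (−X−l)^{2k})_{k ∈ ℕ}` is a basis of
`P_l = {p ∈ ℂ[X] : p(−X−l) = p(X)}`: it is linearly independent and spans `P_l`. -/
theorem P_basis (l : ℤ) :
    LinearIndependent ℂ
      (fun k : ℕ => (X : Polynomial ℂ) ^ (2 * k) + (-X - C (l : ℂ)) ^ (2 * k)) ∧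
    (Submodule.span ℂ
        (Set.range fun k : ℕ => (X : Polynomial ℂ) ^ (2 * k) + (-X - C (l : ℂ)) ^ (2 * k)) :
      Set (Polynomial ℂ)) =
    {p : Polynomial ℂ | p.comp (-X - C (l : ℂ)) = p} := by
  set f : ℕ → Polynomial ℂ := fun k => X ^ (2 * k) + (-X - C (l : ℂ)) ^ (2 * k) with hfdef
  have hneg : ∀ k : ℕ, (-X - C (l : ℂ)) ^ (2 * k) = (X + C (l : ℂ)) ^ (2 * k) := by
    intro k
    rw [show -X - C (l : ℂ) = -(X + C (l : ℂ)) by ring, Even.neg_pow (even_two_mul k)]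
  have hmon : ∀ k : ℕ, ((X + C (l : ℂ)) ^ (2 * k)).Monic := fun k => (monic_X_add_C _).pow _
  have hdm : ∀ k : ℕ, ((X + C (l : ℂ)) ^ (2 * k)).natDegree = 2 * k := by
    intro k; rw [natDegree_pow, natDegree_X_add_C, mul_one]
  have hcoeff : ∀ k : ℕ, (f k).coeff (2 * k) = 2 := by
    intro k
    have h1 : ((X + C (l : ℂ)) ^ (2 * k)).coeff (2 * k) = 1 := by
      have := (hmon k).coeff_natDegree
      rwa [hdm k] at this
    have hfk : f k = X ^ (2 * k) + (X + C (l : ℂ)) ^ (2 * k) := by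
      rw [hfdef]; dsimp only; rw [hneg k]
    rw [hfk, coeff_add, coeff_X_pow, if_pos rfl, h1]
    norm_num
  have hdegle : ∀ k : ℕ, (f k).natDegree ≤ 2 * k := by
    intro k
    refine le_trans (natDegree_add_le _ _) (max_le ?_ ?_)
    · simp
    · rw [hneg k, hdm k]
  have hdeg : ∀ k : ℕ, (f k).natDegree = 2 * k := by
    intro k
    refine le_antisymm (hdegle k) (le_natDegree_of_ne_zero ?_)
    rw [hcoeff k]; norm_num
  have hinv : (-X - C (l : ℂ)).comp (-X - C (l : ℂ)) = X := by
    simp only [sub_comp, neg_comp, X_comp, C_comp]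
    ring
  have hfix : ∀ k : ℕ, (f k).comp (-X - C (l : ℂ)) = f k := by
    intro k
    simp only [hfdef, add_comp, pow_comp, X_comp, hinv]
    ring
  constructor
  · -- linear independence
    rw [linearIndependent_iff']
    intro s
    induction s using Finset.induction_on_max with
    | empty => simp
    | insert a s ha ih =>
      intro g hsum i hi
      have hnotmem : a ∉ s := fun h => lt_irrefl a (ha a h)
      rw [Finset.sum_insert hnotmem] at hsum
      have hga : g a = 0 := by
        have hc := congrArg (fun p : Polynomial ℂ => p.coeff (2 * a)) hsum
        simp only [coeff_add, coeff_smul, finset_sum_coeff, coeff_zero, smul_eq_mul] at hc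
        have hz : ∀ j ∈ s, g j * (f j).coeff (2 * a) = 0 := by
          intro j hj
          have : (f j).coeff (2 * a) = 0 := by
            apply coeff_eq_zero_of_natDegree_lt
            rw [hdeg j]
            have := ha j hj
            omega
          rw [this, mul_zero]
        rw [Finset.sum_eq_zero hz, add_zero, hcoeff a] at hc
        have h2 : (2 : ℂ) ≠ 0 := by norm_num
        exact (mul_eq_zero.1 hc).resolve_right h2
      rcases Finset.mem_insert.1 hi with rfl | hi'
      · exact hga
      · apply ih g _ i hi'
        rwa [hga, zero_smul, zero_add] at hsum
  · -- span
    apply subset_antisymm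
    · intro p hp
      refine Submodule.span_induction ?_ ?_ ?_ ?_ hp
      · rintro q ⟨k, rfl⟩
        exact hfix k
      · simp [Set.mem_setOf_eq]
      · intro q r _ _ hq hr
        simp only [Set.mem_setOf_eq, add_comp] at *
        rw [hq, hr]
      · intro c q _ hq
        simp only [Set.mem_setOf_eq, smul_comp] at *
        rw [hq]
    · -- every fixed polynomial is in the span
      have key : ∀ n : ℕ, ∀ p : Polynomial ℂ, p.natDegree ≤ n →
          p.comp (-X - C (l : ℂ)) = p → p ∈ Submodule.span ℂ (Set.range f) := by
        intro n
        induction n with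
        | zero =>
          intro p hp _
          have hc : p = C (p.coeff 0) := eq_C_of_natDegree_le_zero hp
          have hf0 : f 0 = C 2 := by
            rw [hfdef]; dsimp only
            rw [mul_zero, pow_zero, pow_zero, ← C_1, ← C_add]
            norm_num
          have : p = (p.coeff 0 / 2) • f 0 := by
            rw [hf0, Polynomial.smul_C, smul_eq_mul, div_mul_cancel₀ _ (by norm_num : (2:ℂ) ≠ 0)]
            exact hc
          rw [this]
          exact Submodule.smul_mem _ _ (Submodule.subset_span ⟨0, rfl⟩)
        | succ n ih =>
          intro p hp hfixp
          by_cases hp0 : p = 0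
          · simp [hp0]
          by_cases hle : p.natDegree ≤ n
          · exact ih p hle hfixp
          have hm : p.natDegree = n + 1 := le_antisymm hp (Nat.lt_of_not_le hle)
          -- degree of p is even
          have hqd : (-X - C (l : ℂ)).natDegree = 1 := by
            rw [show -X - C (l : ℂ) = -(X + C (l : ℂ)) by ring, natDegree_neg,
              natDegree_X_add_C]
          have hqlc : (-X - C (l : ℂ)).leadingCoeff = -1 := by
            rw [show -X - C (l : ℂ) = -(X + C (l : ℂ)) by ring, leadingCoeff_neg,
              (monic_X_add_C _).leadingCoeff]
          have hlc := leadingCoeff_comp (q := -X - C (l : ℂ)) (p := p) (by rw [hqd]; norm_num)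
          rw [hfixp, hqlc] at hlc
          have hlcne : p.leadingCoeff ≠ 0 := leadingCoeff_ne_zero.2 hp0
          have heven : Even p.natDegree := by
            rw [← neg_one_pow_eq_one_iff_even (R := ℂ) (by norm_num)]
            have := hlc.symm
            nth_rewrite 2 [← mul_one p.leadingCoeff] at this
            exact mul_left_cancel₀ hlcne this |>.symm ▸ rfl
          obtain ⟨k, hk⟩ := heven
          have hk2 : p.natDegree = 2 * k := by rw [hk]; ring
          set c : ℂ := p.leadingCoeff / 2 with hcdef
          set p' : Polynomial ℂ := p - c • f k with hp'def
          have hfixp' : p'.comp (-X - C (l : ℂ)) = p' := by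
            rw [hp'def, sub_comp, smul_comp, hfixp, hfix k]
          have hp'coeff : p'.coeff (2 * k) = 0 := by
            rw [hp'def, coeff_sub, coeff_smul, hcoeff k, smul_eq_mul, hcdef,
              div_mul_cancel₀ _ (by norm_num : (2:ℂ) ≠ 0), ← hk2,
              ← leadingCoeff, sub_self]
          have hp'le : p'.natDegree ≤ 2 * k := by
            refine le_trans (natDegree_sub_le _ _) (max_le ?_ ?_)
            · rw [← hk2]
            · exact le_trans (natDegree_smul_le _ _) (le_of_eq (hdeg k))
          have hp'lt : p'.natDegree ≤ n := by
            by_cases h0 : p' = 0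
            · simp [h0]
            have hne : p'.natDegree ≠ 2 * k := by
              intro h
              apply leadingCoeff_ne_zero.2 h0
              rw [leadingCoeff, h, hp'coeff]
            have : p'.natDegree < 2 * k := lt_of_le_of_ne hp'le hne
            omega
          have hp'mem : p' ∈ Submodule.span ℂ (Set.range f) := ih p' hp'lt hfixp'
          have : p = p' + c • f k := by rw [hp'def]; ring
          rw [this]
          exact Submodule.add_mem _ hp'mem
            (Submodule.smul_mem _ _ (Submodule.subset_span ⟨k, rfl⟩))
      intro p hp
      exact key p.natDegree p le_rfl hp
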